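/- Isometries escaping to infinity induce weakly null composition operators: Let $M$ be a complete Riemannian manifold cocompact under its isometry group, and let $\eta_k \in Iso(M)$ be such that for some $x_0 \in M$ the sequence $\eta_k(x_0)$ has no convergent subsequence. Then the operators $T_k : u \mapsto u \circ \eta_k$ on $L^2(M)$ (or $W^{1,p}(M)$) converge weakly to zero elementwise: for every $u$, $T_k u \rightharpoonup 0$. -/

import Mathlib

open Filter Topology MeasureTheory Metric ENNReal

private lemma aux_cs {α : Type*} [MeasurableSpace α] {μ : Measure α} {f g : α → ℝ}
    (hf : MemLp f 2 μ) (hg : MemLp g 2 μ) :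
    |∫ x, f x * g x ∂μ| ≤ (eLpNorm f 2 μ).toReal * (eLpNorm g 2 μ).toReal := by
  have h1 : ∫ x, f x * g x ∂μ = inner (𝕜 := ℝ) (hf.toLp f) (hg.toLp g) := by
    rw [L2.inner_def]
    refine integral_congr_ae ?_
    filter_upwards [hf.coeFn_toLp, hg.coeFn_toLp] with x hx hy
    simp [hx, hy, RCLike.inner_apply, mul_comm]
  rw [h1, ← Lp.norm_toLp f hf, ← Lp.norm_toLp g hg]
  exact abs_real_inner_le_norm _ _

private lemma aux_int {α : Type*} [MeasurableSpace α] {μ : Measure α} {f g : α → ℝ}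
    (hf : MemLp f 2 μ) (hg : MemLp g 2 μ) :
    Integrable (fun x => f x * g x) μ := by
  have h := L2.integrable_inner (𝕜 := ℝ) (hf.toLp f) (hg.toLp g)
  refine h.congr ?_
  filter_upwards [hf.coeFn_toLp, hg.coeFn_toLp] with x hx hy
  simp [hx, hy, RCLike.inner_apply, mul_comm]

private lemma aux_trunc {M : Type*} [MetricSpace M] [MeasurableSpace M] [OpensMeasurableSpace M]
    {μ : Measure M} (x₀ : M) {u : M → ℝ} (hu : MemLp u 2 μ) :
    Tendsto (fun n : ℕ => eLpNorm (((closedBall x₀ (n : ℝ))ᶜ).indicator u) 2 μ) atTop (𝓝 0) := by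
  have hexp : (2 : ℝ≥0∞).toReal = 2 := by simp
  have hfin : (∫⁻ x, (‖u x‖₊ : ℝ≥0∞) ^ (2 : ℝ) ∂μ) ≠ ∞ := by
    have h := lintegral_rpow_enorm_lt_top_of_eLpNorm_lt_top (f := u) (p := 2)
      two_ne_zero ENNReal.ofNat_ne_top hu.2
    rw [hexp] at h; exact h.ne
  have hmeasu : AEMeasurable (fun x => (‖u x‖₊ : ℝ≥0∞) ^ (2 : ℝ)) μ :=
    hu.1.enorm.pow_const _
  have hL : Tendsto (fun n : ℕ => ∫⁻ x,
      ((closedBall x₀ (n : ℝ))ᶜ).indicator (fun x => (‖u x‖₊ : ℝ≥0∞) ^ (2 : ℝ)) x ∂μ)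
      atTop (𝓝 0) := by
    have h := tendsto_lintegral_of_dominated_convergence' (μ := μ) (f := fun _ => 0)
      (F := fun n x => ((closedBall x₀ (n : ℝ))ᶜ).indicator
        (fun x => (‖u x‖₊ : ℝ≥0∞) ^ (2 : ℝ)) x)
      (fun x => (‖u x‖₊ : ℝ≥0∞) ^ (2 : ℝ))
      (fun _ => hmeasu.indicator measurableSet_closedBall.compl)
      (fun _ => Eventually.of_forall fun x => Set.indicator_le_self _ _ x)
      hfin ?_
    · simpa using h
    · refine Eventually.of_forall fun x => ?_
      have hev : ∀ᶠ n : ℕ in atTop,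
          ((closedBall x₀ (n : ℝ))ᶜ).indicator (fun x => (‖u x‖₊ : ℝ≥0∞) ^ (2 : ℝ)) x = 0 := by
        filter_upwards [eventually_ge_atTop ⌈dist x x₀⌉₊] with n hn
        have hx : x ∈ closedBall x₀ (n : ℝ) := by
          rw [mem_closedBall]
          exact le_trans (Nat.le_ceil _) (by exact_mod_cast hn)
        simp [Set.indicator_of_notMem, hx]
      exact tendsto_const_nhds.congr' (hev.mono fun n h => h.symm)
  have heq : ∀ n : ℕ, eLpNorm (((closedBall x₀ (n : ℝ))ᶜ).indicator u) 2 μ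
      = (∫⁻ x, ((closedBall x₀ (n : ℝ))ᶜ).indicator
          (fun x => (‖u x‖₊ : ℝ≥0∞) ^ (2 : ℝ)) x ∂μ) ^ (1 / 2 : ℝ) := by
    intro n
    rw [eLpNorm_eq_lintegral_rpow_enorm_toReal two_ne_zero ENNReal.ofNat_ne_top, hexp]
    congr 1
    refine lintegral_congr fun x => ?_
    by_cases hx : x ∈ (closedBall x₀ (n : ℝ))ᶜ
    · simp [Set.indicator_of_mem hx]; rfl
    · simp [Set.indicator_of_notMem hx, ENNReal.zero_rpow_of_pos]
  simp_rw [heq]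
  have hc : Tendsto (fun a : ℝ≥0∞ => a ^ (1 / 2 : ℝ)) (𝓝 0) (𝓝 0) := by
    have := (ENNReal.continuous_rpow_const (y := (1 / 2 : ℝ))).tendsto 0
    rwa [ENNReal.zero_rpow_of_pos (by norm_num)] at this
  exact hc.comp hL

theorem escaping_isometries_weakly_null {M : Type*} [MetricSpace M]
    [CompleteSpace M] [ProperSpace M] [MeasurableSpace M] [BorelSpace M]
    (μ : Measure M)
    -- cocompactness of `M` under its full isometry group
    (hcocompact : ∃ V : Set M, IsCompact V ∧
      (⋃ η : M ≃ᵢ M, η '' V) = Set.univ)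
    (η : ℕ → M ≃ᵢ M)
    -- isometries preserve the (Riemannian) measure
    (hpres : ∀ k, MeasurePreserving (η k) μ μ)
    (x₀ : M)
    -- `η_k(x₀)` has no convergent subsequence
    (hesc : ¬ ∃ (ψ : ℕ → ℕ) (x : M), StrictMono ψ ∧
      Tendsto (fun k => η (ψ k) x₀) atTop (𝓝 x))
    (u : M → ℝ) (hu : MemLp u 2 μ) :
    ∀ v : M → ℝ, MemLp v 2 μ →
      Tendsto (fun k => ∫ x, u (η k x) * v x ∂μ) atTop (𝓝 0) := by
  intro v hv
  -- Step 1: the isometries escape to infinity in distance.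
  have hdist : Tendsto (fun k => dist (η k x₀) x₀) atTop atTop := by
    by_contra hnot
    rw [Filter.tendsto_atTop] at hnot
    push_neg at hnot
    obtain ⟨B, hB⟩ := hnot
    have hB : ∃ᶠ n in atTop, ¬ (B ≤ dist (η n x₀) x₀) := hB.mono fun n h => not_le.2 h
    obtain ⟨φ, hφmono, hφ⟩ := Filter.extraction_of_frequently_atTop hB
    have hmem : ∀ n, η (φ n) x₀ ∈ closedBall x₀ B := fun n => by
      have h := hφ n
      rw [not_le] at h
      exact mem_closedBall.2 h.le
    obtain ⟨x, -, ψ, hψmono, hψ⟩ := (isCompact_closedBall x₀ B).tendsto_subseq hmem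
    exact hesc ⟨φ ∘ ψ, x, hφmono.comp hψmono, hψ⟩
  rw [NormedAddCommGroup.tendsto_nhds_zero]
  intro ε hε
  set Cu : ℝ := (eLpNorm u 2 μ).toReal with hCu
  set Cv : ℝ := (eLpNorm v 2 μ).toReal with hCv
  have hCu0 : 0 ≤ Cu := ENNReal.toReal_nonneg
  have hCv0 : 0 ≤ Cv := ENNReal.toReal_nonneg
  set δ : ℝ := ε / (3 * (Cu + Cv + 1)) with hδdef
  have hden : 0 < Cu + Cv + 1 := by linarith
  have hδ : 0 < δ := by positivity
  -- Step 2: choose a truncation radius n.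
  have htu : Tendsto (fun n : ℕ =>
      (eLpNorm (((closedBall x₀ (n : ℝ))ᶜ).indicator u) 2 μ).toReal) atTop (𝓝 0) := by
    have := (ENNReal.tendsto_toReal (a := 0) (by simp)).comp (aux_trunc x₀ hu)
    exact this
  have htv : Tendsto (fun n : ℕ =>
      (eLpNorm (((closedBall x₀ (n : ℝ))ᶜ).indicator v) 2 μ).toReal) atTop (𝓝 0) := by
    have := (ENNReal.tendsto_toReal (a := 0) (by simp)).comp (aux_trunc x₀ hv)
    exact this
  obtain ⟨n, hnu, hnv⟩ := ((htu.eventually (gt_mem_nhds hδ)).and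
    (htv.eventually (gt_mem_nhds hδ))).exists
  set s : Set M := closedBall x₀ (n : ℝ) with hs
  have hsm : MeasurableSet s := measurableSet_closedBall
  set u₁ : M → ℝ := s.indicator u with hu₁def
  set u₂ : M → ℝ := sᶜ.indicator u with hu₂def
  set v₁ : M → ℝ := s.indicator v with hv₁def
  set v₂ : M → ℝ := sᶜ.indicator v with hv₂def
  have hu₁ : MemLp u₁ 2 μ := hu.indicator hsm
  have hu₂ : MemLp u₂ 2 μ := hu.indicator hsm.compl
  have hv₁ : MemLp v₁ 2 μ := hv.indicator hsm
  have hv₂ : MemLp v₂ 2 μ := hv.indicator hsm.compl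
  have hu₂comp : ∀ k, MemLp (fun x => u₂ (η k x)) 2 μ := fun k =>
    hu₂.comp_measurePreserving (hpres k)
  have hu₁comp : ∀ k, MemLp (fun x => u₁ (η k x)) 2 μ := fun k =>
    hu₁.comp_measurePreserving (hpres k)
  -- decomposition of the integral
  have hsplit : ∀ k, ∫ x, u (η k x) * v x ∂μ
      = (∫ x, u₂ (η k x) * v x ∂μ) + ((∫ x, u₁ (η k x) * v₂ x ∂μ)
        + ∫ x, u₁ (η k x) * v₁ x ∂μ) := by
    intro k
    have h1 : Integrable (fun x => u₂ (η k x) * v x) μ := aux_int (hu₂comp k) hv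
    have h2 : Integrable (fun x => u₁ (η k x) * v₂ x) μ := aux_int (hu₁comp k) hv₂
    have h3 : Integrable (fun x => u₁ (η k x) * v₁ x) μ := aux_int (hu₁comp k) hv₁
    have h23 : Integrable (fun x => u₁ (η k x) * v₂ x + u₁ (η k x) * v₁ x) μ := h2.add h3
    have hkey : ∫ x, u (η k x) * v x ∂μ
        = ∫ x, (u₂ (η k x) * v x + (u₁ (η k x) * v₂ x + u₁ (η k x) * v₁ x)) ∂μ := by
      refine integral_congr_ae (Eventually.of_forall fun x => ?_)
      show u (η k x) * v x
        = u₂ (η k x) * v x + (u₁ (η k x) * v₂ x + u₁ (η k x) * v₁ x)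
      have hux : u₁ (η k x) + u₂ (η k x) = u (η k x) :=
        congrFun (Set.indicator_self_add_compl s u) (η k x)
      have hvx : v₁ x + v₂ x = v x := congrFun (Set.indicator_self_add_compl s v) x
      rw [← hux, ← hvx]; ring
    rw [hkey, integral_add h1 h23, integral_add h2 h3]
  -- the compactly-supported part eventually vanishes
  have hvanish : ∀ᶠ k in atTop, ∫ x, u₁ (η k x) * v₁ x ∂μ = 0 := by
    filter_upwards [tendsto_atTop.1 hdist (2 * (n : ℝ) + 1)] with k hk
    have hzero : ∀ x, u₁ (η k x) * v₁ x = 0 := by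
      intro x
      by_cases hx : x ∈ s
      · have hηx : η k x ∉ s := by
          intro hmem
          have h1 : dist (η k x₀) x₀ ≤ dist (η k x₀) (η k x) + dist (η k x) x₀ :=
            dist_triangle _ _ _
          have h2 : dist (η k x₀) (η k x) = dist x₀ x := (η k).dist_eq x₀ x
          have h3 : dist x₀ x ≤ (n : ℝ) := by
            rw [dist_comm]; exact mem_closedBall.1 hx
          have h4 : dist (η k x) x₀ ≤ (n : ℝ) := mem_closedBall.1 hmem
          linarith
        simp [hu₁def, Set.indicator_of_notMem hηx]
      · simp [hv₁def, Set.indicator_of_notMem hx]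
    simp [hzero]
  -- bounds for the two error terms
  have hbound1 : ∀ k, |∫ x, u₂ (η k x) * v x ∂μ|
      ≤ (eLpNorm u₂ 2 μ).toReal * Cv := by
    intro k
    have h := aux_cs (hu₂comp k) hv
    have heq : eLpNorm (u₂ ∘ ⇑(η k)) 2 μ = eLpNorm u₂ 2 μ :=
      eLpNorm_comp_measurePreserving hu₂.1 (hpres k)
    rwa [show (fun x => u₂ (η k x)) = u₂ ∘ ⇑(η k) from rfl, heq] at h
  have hbound2 : ∀ k, |∫ x, u₁ (η k x) * v₂ x ∂μ|
      ≤ Cu * (eLpNorm v₂ 2 μ).toReal := by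
    intro k
    have h := aux_cs (hu₁comp k) hv₂
    have heq : eLpNorm (u₁ ∘ ⇑(η k)) 2 μ = eLpNorm u₁ 2 μ :=
      eLpNorm_comp_measurePreserving hu₁.1 (hpres k)
    rw [show (fun x => u₁ (η k x)) = u₁ ∘ ⇑(η k) from rfl, heq] at h
    refine h.trans (mul_le_mul_of_nonneg_right ?_ ENNReal.toReal_nonneg)
    exact ENNReal.toReal_mono hu.2.ne (eLpNorm_indicator_le u)
  -- conclude
  filter_upwards [hvanish] with k hk
  rw [Real.norm_eq_abs, hsplit k, hk, add_zero]
  have e2 : (eLpNorm u₂ 2 μ).toReal < δ := hnu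
  have e3 : (eLpNorm v₂ 2 μ).toReal < δ := hnv
  have e20 : 0 ≤ (eLpNorm u₂ 2 μ).toReal := ENNReal.toReal_nonneg
  have e30 : 0 ≤ (eLpNorm v₂ 2 μ).toReal := ENNReal.toReal_nonneg
  have hb1 : |∫ x, u₂ (η k x) * v x ∂μ| ≤ δ * (Cu + Cv + 1) := by
    refine (hbound1 k).trans ?_
    have : (eLpNorm u₂ 2 μ).toReal * Cv ≤ δ * Cv :=
      mul_le_mul_of_nonneg_right e2.le hCv0
    nlinarith
  have hb2 : |∫ x, u₁ (η k x) * v₂ x ∂μ| ≤ δ * (Cu + Cv + 1) := by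
    refine (hbound2 k).trans ?_
    nlinarith
  have hδε : δ * (Cu + Cv + 1) = ε / 3 := by
    rw [hδdef, div_mul_eq_mul_div, mul_comm (3:ℝ), ← div_div, mul_div_assoc, div_self hden.ne', mul_one]
  calc |∫ x, u₂ (η k x) * v x ∂μ + ∫ x, u₁ (η k x) * v₂ x ∂μ|
      ≤ |∫ x, u₂ (η k x) * v x ∂μ| + |∫ x, u₁ (η k x) * v₂ x ∂μ| := abs_add_le _ _
    _ ≤ δ * (Cu + Cv + 1) + δ * (Cu + Cv + 1) := add_le_add hb1 hb2
    _ < ε := by rw [hδε]; linarith
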